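/- arXiv:2412.10197 — 2 statements merged into one kernel-verified Lean document; each statement's English description precedes it below -/
import Mathlib

section
/- Let S be an n×n symmetric Seidel matrix with quasi-orthogonality index equal to 1. Then n is odd and the characteristic polynomial of S is x(x² - n)^((n-1)/2). -/
open Matrix Polynomial

/-- `S` is a principal submatrix of `Q`. -/
def IsPrincipalSubmatrix {m n : ℕ} (S : Matrix (Fin m) (Fin m) ℝ)
    (Q : Matrix (Fin n) (Fin n) ℝ) : Prop :=
  ∃ f : Fin m → Fin n, StrictMono f ∧ ∀ i j, S i j = Q (f i) (f j)

/-- `Q` is quasi-orthogonal: `Qᵀ * Q = q • 1` for some `q > 0`. -/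
def IsQuasiOrthogonal {n : ℕ} (Q : Matrix (Fin n) (Fin n) ℝ) : Prop :=
  ∃ q : ℝ, 0 < q ∧ Qᵀ * Q = q • (1 : Matrix (Fin n) (Fin n) ℝ)

/-- algebraic multiplicity of `lam` as an eigenvalue of `S` (0 if not a root). -/
noncomputable def eigMult {n : ℕ} (S : Matrix (Fin n) (Fin n) ℝ) (lam : ℝ) : ℕ :=
  (Matrix.charpoly S).rootMultiplicity lam

/-- `ρ` is the spectral radius of the real matrix `S`. -/
def IsSpectralRadius {n : ℕ} (S : Matrix (Fin n) (Fin n) ℝ) (ρ : ℝ) : Prop :=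
  ((Matrix.charpoly S).IsRoot ρ ∨ (Matrix.charpoly S).IsRoot (-ρ)) ∧
    ∀ lam : ℝ, (Matrix.charpoly S).IsRoot lam → |lam| ≤ ρ

/-- quasi-orthogonality index: least `d` such that `S` is a principal submatrix of a
symmetric quasi-orthogonal matrix of order `n + d`. -/
noncomputable def qIndex {n : ℕ} (S : Matrix (Fin n) (Fin n) ℝ) : ℕ :=
  sInf {d : ℕ | ∃ Q : Matrix (Fin (n + d)) (Fin (n + d)) ℝ,
    Q.IsSymm ∧ IsQuasiOrthogonal Q ∧ IsPrincipalSubmatrix S Q}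

/-- symmetric Seidel matrix: zero diagonal, off-diagonal entries `±1`. -/
def IsSeidel {n : ℕ} (S : Matrix (Fin n) (Fin n) ℝ) : Prop :=
  S.IsSymm ∧ (∀ i, S i i = 0) ∧ ∀ i j, i ≠ j → S i j = 1 ∨ S i j = -1

/-- The characteristic polynomial of a diagonal matrix. -/
lemma charpoly_diag' {n : ℕ} (d : Fin n → ℝ) :
    (Matrix.diagonal d).charpoly = ∏ i, (X - C (d i)) := by
  rw [Matrix.charpoly_of_upperTriangular _ (Matrix.blockTriangular_diagonal d)]
  simp

/-- The characteristic polynomial is invariant under orthogonal conjugation. -/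
lemma charpoly_unitary_conj' {n : ℕ} (U D : Matrix (Fin n) (Fin n) ℝ)
    (h1 : U * Uᵀ = 1) (h2 : Uᵀ * U = 1) :
    (U * D * Uᵀ).charpoly = D.charpoly := by
  set F := (C : ℝ →+* ℝ[X]).mapMatrix (m := Fin n)
  have hs : F U * Matrix.scalar (Fin n) X * F Uᵀ = Matrix.scalar (Fin n) X := by
    rw [(Matrix.scalar_commute (X : ℝ[X]) (fun r => Commute.all _ _) (F U)).symm.eq,
      mul_assoc, ← RingHom.map_mul F, h1, RingHom.map_one, mul_one]
  have key : charmatrix (U * D * Uᵀ) = F U * charmatrix D * F Uᵀ := by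
    rw [charmatrix, charmatrix, mul_sub, sub_mul, hs, RingHom.map_mul F, RingHom.map_mul F]
  rw [Matrix.charpoly, Matrix.charpoly, key, det_mul, det_mul, mul_comm, ← mul_assoc,
    ← det_mul, ← RingHom.map_mul F, h2, RingHom.map_one, det_one, one_mul]

set_option maxHeartbeats 1000000 in
theorem stmt6 {n : ℕ} (S : Matrix (Fin n) (Fin n) ℝ) (hS : IsSeidel S)
    (hind : qIndex S = 1) :
    Odd n ∧ S.charpoly = X * (X ^ 2 - C (n : ℝ)) ^ ((n - 1) / 2) := by
  obtain ⟨hSsym, hd, ho⟩ := hS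
  simp only [qIndex] at hind
  -- n = 0 is impossible
  rcases Nat.eq_zero_or_pos n with hn0 | hn
  · exfalso
    subst hn0
    have h0 : (0 : ℕ) ∈ {d : ℕ | ∃ Q : Matrix (Fin (0 + d)) (Fin (0 + d)) ℝ,
        Q.IsSymm ∧ IsQuasiOrthogonal Q ∧ IsPrincipalSubmatrix S Q} :=
      ⟨S, hSsym, ⟨1, one_pos, by ext i j; exact i.elim0⟩, id, strictMono_id,
        fun i j => i.elim0⟩
    have := Nat.sInf_le h0
    omega
  -- obtain the quasi-orthogonal extension of order n + 1
  have hne : {d : ℕ | ∃ Q : Matrix (Fin (n + d)) (Fin (n + d)) ℝ,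
      Q.IsSymm ∧ IsQuasiOrthogonal Q ∧ IsPrincipalSubmatrix S Q}.Nonempty := by
    by_contra h
    rw [Set.not_nonempty_iff_eq_empty] at h
    rw [h, Nat.sInf_empty] at hind
    omega
  have h1 := Nat.sInf_mem hne
  rw [hind] at h1
  obtain ⟨Q, hQsym, ⟨q, hq, hQQ⟩, f, hf, hSf⟩ := h1
  have hQe : ∀ a b, Q a b = Q b a := fun a b => congrFun (congrFun hQsym b) a
  have hSe : ∀ a b, S a b = S b a := fun a b => congrFun (congrFun hSsym b) a
  -- the index missed by f
  obtain ⟨m0, hm0⟩ : ∃ m0 : Fin (n + 1), m0 ∉ Finset.univ.image f := by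
    by_contra h
    push_neg at h
    have h2 : Finset.univ.image f = Finset.univ := Finset.eq_univ_iff_forall.2 h
    have h3 := Finset.card_image_of_injective Finset.univ hf.injective
    rw [h2] at h3
    simp [Finset.card_univ] at h3
  have huniv : insert m0 (Finset.univ.image f) = Finset.univ := by
    apply Finset.eq_univ_of_card
    rw [Finset.card_insert_of_notMem hm0, Finset.card_image_of_injective _ hf.injective]
    simp
  have hsplitQ : ∀ g : Fin (n + 1) → ℝ, ∑ k, g k = g m0 + ∑ i, g (f i) := by
    intro g
    rw [← huniv, Finset.sum_insert hm0,
      Finset.sum_image (fun a _ b _ h => hf.injective h)]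
  -- entry identities from QᵀQ = q•1
  have hE : ∀ a b, ∑ k, Q k a * Q k b = q * (if a = b then 1 else 0) := by
    intro a b
    have h := congrFun (congrFun hQQ a) b
    simpa [Matrix.mul_apply, Matrix.one_apply, Matrix.transpose_apply, mul_ite] using h
  set u : Fin n → ℝ := fun i => Q (f i) m0 with hu
  have hE1 : ∀ i j, (∑ l, S i l * S j l) + u i * u j = q * (if i = j then 1 else 0) := by
    intro i j
    have h := hE (f i) (f j)
    rw [hsplitQ (fun k => Q k (f i) * Q k (f j))] at h
    simp only [hf.injective.eq_iff] at h
    rw [← h]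
    have hterm : ∀ l, Q (f l) (f i) * Q (f l) (f j) = S i l * S j l := by
      intro l
      rw [← hSf l i, ← hSf l j, hSe l i, hSe l j]
    rw [Finset.sum_congr rfl fun l _ => hterm l, hQe m0 (f i), hQe m0 (f j)]
    ring
  -- row sums of squares of a Seidel matrix
  have hrow : ∀ i : Fin n, (∑ l, S i l * S i l) = (n : ℝ) - 1 := by
    intro i
    have hone : ∀ l ∈ Finset.univ.erase i, S i l * S i l = 1 := by
      intro l hl
      rcases ho i l (Ne.symm (Finset.ne_of_mem_erase hl)) with h | h <;> rw [h] <;> ring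
    rw [← Finset.add_sum_erase _ _ (Finset.mem_univ i), hd i,
      Finset.sum_congr rfl hone, Finset.sum_const, Finset.card_erase_of_mem (Finset.mem_univ i),
      Finset.card_univ, Fintype.card_fin]
    rw [nsmul_eq_mul, Nat.cast_sub hn]
    push_cast
    ring
  set t : ℝ := q - ((n : ℝ) - 1) with htq
  have hdiagu : ∀ i, u i ^ 2 = t := by
    intro i
    have h := hE1 i i
    rw [hrow i, if_pos rfl] at h
    nlinarith [h]
  -- case t = 0 : S itself would be quasi-orthogonal, contradicting qIndex = 1
  rcases eq_or_ne t 0 with ht0 | htne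
  · exfalso
    have hu0 : ∀ i, u i = 0 := by
      intro i
      have h := hdiagu i
      rw [ht0] at h
      exact pow_eq_zero_iff (n := 2) (by norm_num) |>.1 h
    have hQO : Sᵀ * S = q • (1 : Matrix (Fin n) (Fin n) ℝ) := by
      ext i j
      have h := hE1 i j
      rw [hu0 i, hu0 j] at h
      simp only [Matrix.mul_apply, Matrix.transpose_apply, Matrix.smul_apply, Matrix.one_apply,
        smul_eq_mul]
      have hterm : ∀ k, S k i * S k j = S i k * S j k := by
        intro k
        rw [hSe k i, hSe k j]
      rw [Finset.sum_congr rfl fun k _ => hterm k]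
      simp only [mul_ite, mul_one, mul_zero, add_zero] at h ⊢
      split_ifs at h ⊢ <;> linarith [h]
    have h0 : (0 : ℕ) ∈ {d : ℕ | ∃ Q : Matrix (Fin (n + d)) (Fin (n + d)) ℝ,
        Q.IsSymm ∧ IsQuasiOrthogonal Q ∧ IsPrincipalSubmatrix S Q} :=
      ⟨S, hSsym, ⟨q, hq, hQO⟩, id, strictMono_id, fun i j => rfl⟩
    have := Nat.sInf_le h0
    omega
  have ht : 0 < t := by
    have h := hdiagu ⟨0, hn⟩
    have h0 : 0 ≤ t := h ▸ sq_nonneg _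
    exact lt_of_le_of_ne h0 (Ne.symm htne)
  -- the matrix identity S² = q•1 - uuᵀ
  have hSS : S * S = q • 1 - Matrix.vecMulVec u u := by
    ext i j
    have h := hE1 i j
    simp only [Matrix.sub_apply, Matrix.smul_apply, Matrix.one_apply, Matrix.vecMulVec_apply,
      Matrix.mul_apply, smul_eq_mul]
    have hterm : ∀ l, S i l * S l j = S i l * S j l := fun l => by rw [hSe l j]
    rw [Finset.sum_congr rfl fun l _ => hterm l]
    simp only [mul_ite, mul_one, mul_zero] at h ⊢
    split_ifs at h ⊢ <;> linarith [h]
  -- spectral decomposition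
  have hH : S.IsHermitian := by
    rw [Matrix.IsHermitian, Matrix.conjTranspose_eq_transpose_of_trivial]
    exact hSsym
  set ε : Fin n → ℝ := hH.eigenvalues with hε
  set U : Matrix (Fin n) (Fin n) ℝ := (hH.eigenvectorUnitary : Matrix (Fin n) (Fin n) ℝ) with hU
  have hstar : star U = Uᵀ := by
    rw [Matrix.star_eq_conjTranspose, Matrix.conjTranspose_eq_transpose_of_trivial]
  have hU2 : Uᵀ * U = 1 := by
    have h := (hH.eigenvectorUnitary).2.1
    rwa [← hU, hstar] at h
  have hU1 : U * Uᵀ = 1 := by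
    have h := (hH.eigenvectorUnitary).2.2
    rwa [← hU, hstar] at h
  have hdiagS : Uᵀ * S * U = Matrix.diagonal ε := by
    have h := hH.conjStarAlgAut_star_eigenvectorUnitary
    rw [Unitary.conjStarAlgAut_apply, Unitary.coe_star, star_star] at h
    rw [RCLike.ofReal_real_eq_id] at h
    rwa [← hU, hstar, Function.id_comp] at h
  -- conjugated vector
  set v : Fin n → ℝ := fun i => ∑ k, U k i * u k with hv
  have hUortho : ∀ a b, (∑ i, U a i * U b i) = if a = b then 1 else 0 := by
    intro a b
    have h := congrFun (congrFun hU1 a) b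
    simpa [Matrix.mul_apply, Matrix.one_apply] using h
  have hvv : Uᵀ * Matrix.vecMulVec u u * U = Matrix.vecMulVec v v := by
    ext i j
    simp only [Matrix.mul_apply, Matrix.vecMulVec_apply, Matrix.transpose_apply, hv]
    rw [Finset.sum_mul_sum, Finset.sum_comm]
    refine Finset.sum_congr rfl fun b _ => ?_
    rw [Finset.sum_mul]
    exact Finset.sum_congr rfl fun a _ => by ring
  have hconj : Matrix.diagonal ε * Matrix.diagonal ε = q • 1 - Matrix.vecMulVec v v := by
    calc Matrix.diagonal ε * Matrix.diagonal ε
        = (Uᵀ * S * U) * (Uᵀ * S * U) := by rw [hdiagS]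
      _ = Uᵀ * (S * (U * Uᵀ) * S) * U := by simp only [Matrix.mul_assoc]
      _ = Uᵀ * (S * S) * U := by rw [hU1, Matrix.mul_one, Matrix.mul_assoc]
      _ = q • (Uᵀ * U) - Uᵀ * Matrix.vecMulVec u u * U := by
          rw [hSS, Matrix.mul_sub, Matrix.sub_mul, Matrix.mul_smul, Matrix.mul_one,
            Matrix.smul_mul]
      _ = q • 1 - Matrix.vecMulVec v v := by rw [hU2, hvv]
  have hεv : ∀ i j, (if i = j then ε i * ε i else 0)
      = q * (if i = j then 1 else 0) - v i * v j := by
    intro i j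
    have h := congrFun (congrFun hconj i) j
    rw [Matrix.diagonal_mul_diagonal] at h
    by_cases hij : i = j
    · subst hij
      simpa [Matrix.vecMulVec_apply, Matrix.one_apply] using h
    · simpa [Matrix.diagonal_apply_ne _ hij, Matrix.vecMulVec_apply, Matrix.one_apply, hij] using h
  have hvij : ∀ i j, i ≠ j → v i * v j = 0 := by
    intro i j hij
    have h := hεv i j
    simp [hij] at h
    rcases h with h | h <;> simp [h]
  have hεq : ∀ i, ε i ^ 2 = q - v i ^ 2 := by
    intro i
    have h := hεv i i
    simp at h
    nlinarith [h]
  -- the sum of squares of v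
  have hsumv : ∑ i, v i ^ 2 = (n : ℝ) * t := by
    have key : ∑ i, v i ^ 2 = ∑ a, ∑ b, (u a * u b) * (∑ i, U a i * U b i) := by
      calc ∑ i, v i ^ 2 = ∑ i, ∑ a, ∑ b, (U a i * u a) * (U b i * u b) := by
            refine Finset.sum_congr rfl fun i _ => ?_
            rw [hv, pow_two, Finset.sum_mul_sum]
        _ = ∑ a, ∑ i, ∑ b, (U a i * u a) * (U b i * u b) := Finset.sum_comm
        _ = ∑ a, ∑ b, ∑ i, (U a i * u a) * (U b i * u b) :=
            Finset.sum_congr rfl fun a _ => Finset.sum_comm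
        _ = ∑ a, ∑ b, (u a * u b) * (∑ i, U a i * U b i) := by
            refine Finset.sum_congr rfl fun a _ => Finset.sum_congr rfl fun b _ => ?_
            rw [Finset.mul_sum]
            exact Finset.sum_congr rfl fun i _ => by ring
    rw [key]
    have hrowU : ∀ a, ∑ b, (u a * u b) * (∑ i, U a i * U b i) = u a ^ 2 := by
      intro a
      rw [Finset.sum_eq_single a]
      · rw [hUortho a a, if_pos rfl]; ring
      · intro b _ hb
        rw [hUortho a b, if_neg (Ne.symm hb)]; ring
      · intro h; exact absurd (Finset.mem_univ a) h
    rw [Finset.sum_congr rfl fun a _ => hrowU a, Finset.sum_congr rfl fun a _ => hdiagu a,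
      Finset.sum_const, Finset.card_univ, Fintype.card_fin, nsmul_eq_mul]
  -- the trace of S is zero
  have htr : ∑ i, ε i = 0 := by
    have h1 : Matrix.trace S = 0 := by
      simp [Matrix.trace, Matrix.diag, hd]
    have h2 := congrArg Matrix.trace hdiagS
    rw [Matrix.trace_mul_cycle, hU1, Matrix.one_mul, h1, Matrix.trace_diagonal] at h2
    exact h2.symm
  -- eigenvalue counting
  have hnt : 0 < (n : ℝ) * t := by positivity
  obtain ⟨i₀, hi₀⟩ : ∃ i₀, v i₀ ≠ 0 := by
    by_contra h
    push_neg at h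
    have hz : ∑ i, v i ^ 2 = 0 := Finset.sum_eq_zero fun i _ => by rw [h i]; norm_num
    rw [hz] at hsumv
    linarith
  have hv0 : ∀ j, j ≠ i₀ → v j = 0 := by
    intro j hj
    rcases mul_eq_zero.1 (hvij i₀ j (Ne.symm hj)) with h | h
    · exact absurd h hi₀
    · exact h
  have hvi₀ : v i₀ ^ 2 = (n : ℝ) * t := by
    rw [← hsumv, ← Finset.add_sum_erase _ _ (Finset.mem_univ i₀)]
    rw [Finset.sum_eq_zero fun j hj => by
      rw [hv0 j (Finset.ne_of_mem_erase hj)]; ring]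
    ring
  have hεi₀ : ε i₀ ^ 2 = q - (n : ℝ) * t := by rw [hεq i₀, hvi₀]
  have hεo : ∀ i, i ≠ i₀ → ε i ^ 2 = q := by
    intro i hi
    rw [hεq i, hv0 i hi]
    ring
  set s := Real.sqrt q with hs
  have hs2 : s ^ 2 = q := Real.sq_sqrt hq.le
  have hspos : 0 < s := Real.sqrt_pos.2 hq
  have hker : ∀ i, i ≠ i₀ → ε i = s ∨ ε i = -s := by
    intro i hi
    have h : ε i ^ 2 = s ^ 2 := by rw [hεo i hi, hs2]
    exact sq_eq_sq_iff_eq_or_eq_neg.1 h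
  set A := (Finset.univ.erase i₀).filter (fun i => ε i = s) with hA
  set B := (Finset.univ.erase i₀).filter (fun i => ε i = -s) with hB
  have hdisj : Disjoint A B := by
    rw [Finset.disjoint_filter]
    intro i _ h1 h2
    rw [h1] at h2
    linarith
  have hunion : A ∪ B = Finset.univ.erase i₀ := by
    rw [hA, hB, ← Finset.filter_or]
    apply Finset.filter_true_of_mem
    intro i hi
    exact hker i (Finset.ne_of_mem_erase hi)
  have hcard : A.card + B.card = n - 1 := by
    rw [← Finset.card_union_of_disjoint hdisj, hunion,
      Finset.card_erase_of_mem (Finset.mem_univ i₀), Finset.card_univ, Fintype.card_fin]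
  have hsplit : ε i₀ + ((A.card : ℝ) - B.card) * s = 0 := by
    have h1 : ∑ i ∈ Finset.univ.erase i₀, ε i = ((A.card : ℝ) - B.card) * s := by
      rw [← hunion, Finset.sum_union hdisj]
      rw [Finset.sum_congr rfl fun i hi => (Finset.mem_filter.1 hi).2,
        Finset.sum_congr rfl fun i hi => (Finset.mem_filter.1 hi).2]
      rw [Finset.sum_const, Finset.sum_const, nsmul_eq_mul, nsmul_eq_mul]
      ring
    rw [← h1, Finset.add_sum_erase _ _ (Finset.mem_univ i₀)]
    exact htr
  have hABeq : A.card = B.card := by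
    by_contra hne
    have hk : (1 : ℝ) ≤ ((A.card : ℝ) - B.card) ^ 2 := by
      have hz : ((A.card : ℤ) - B.card) ≠ 0 := by omega
      have hk1 : (1 : ℤ) ≤ ((A.card : ℤ) - B.card) ^ 2 := by
        rcases lt_or_gt_of_ne hz with h | h <;> nlinarith
      have h2 : ((1 : ℤ) : ℝ) ≤ ((((A.card : ℤ) - B.card) ^ 2 : ℤ) : ℝ) := by exact_mod_cast hk1
      push_cast at h2
      linarith
    have hεi₀' : ε i₀ = -(((A.card : ℝ) - B.card) * s) := by linarith
    have hc : q - (n : ℝ) * t = ((A.card : ℝ) - B.card) ^ 2 * q := by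
      rw [← hεi₀, hεi₀', ← hs2]
      ring
    nlinarith
  have hεz : ε i₀ = 0 := by
    rw [hABeq] at hsplit
    simpa using hsplit
  have hqnt : q = (n : ℝ) * t := by
    have h := hεi₀
    rw [hεz] at h
    have h2 : (0:ℝ) = q - (n : ℝ) * t := by rw [← h]; norm_num
    linarith only [h2]
  have hn2 : n = 2 * A.card + 1 := by
    have h := hcard
    rw [hABeq] at h ⊢
    omega
  refine ⟨⟨A.card, by omega⟩, ?_⟩
  -- q = n unless A is empty
  have hqn : A.card = 0 ∨ q = n := by
    rcases Nat.eq_zero_or_pos A.card with h | h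
    · exact Or.inl h
    · right
      have hn2' : (2 : ℝ) ≤ n := by
        have h2 : 2 ≤ n := by omega
        exact_mod_cast h2
      have hqq : q * ((n : ℝ) - 1) = (n : ℝ) * ((n : ℝ) - 1) := by
        rw [htq] at hqnt
        linear_combination (-1 : ℝ) * hqnt
      have hne1 : (n : ℝ) - 1 ≠ 0 := by linarith
      exact mul_right_cancel₀ hne1 hqq
  -- the characteristic polynomial
  have hprod : ∏ i, (X - C (ε i)) = X * ((X ^ 2 - C q) ^ A.card) := by
    rw [← Finset.mul_prod_erase _ _ (Finset.mem_univ i₀), hεz, map_zero, sub_zero]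
    congr 1
    rw [← hunion, Finset.prod_union hdisj]
    rw [Finset.prod_eq_pow_card (fun i hi => by rw [(Finset.mem_filter.1 hi).2]),
      Finset.prod_eq_pow_card (fun i hi => by rw [(Finset.mem_filter.1 hi).2]),
      ← hABeq, ← mul_pow]
    congr 1
    rw [map_neg, sub_neg_eq_add, ← hs2, map_pow]
    ring
  have hspec : S = U * Matrix.diagonal ε * Uᵀ := by
    rw [← hdiagS]
    have h : U * (Uᵀ * S * U) * Uᵀ = (U * Uᵀ) * (S * (U * Uᵀ)) := by
      simp only [Matrix.mul_assoc]
    rw [h, hU1, Matrix.mul_one, Matrix.one_mul]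
  have hexp : (n - 1) / 2 = A.card := by omega
  calc S.charpoly = (U * Matrix.diagonal ε * Uᵀ).charpoly := by rw [← hspec]
    _ = (Matrix.diagonal ε).charpoly := charpoly_unitary_conj' U _ hU1 hU2
    _ = ∏ i, (X - C (ε i)) := charpoly_diag' ε
    _ = X * ((X ^ 2 - C q) ^ A.card) := hprod
    _ = X * (X ^ 2 - C (n : ℝ)) ^ ((n - 1) / 2) := by
        rw [hexp]
        rcases hqn with h | h
        · rw [h, pow_zero, pow_zero]
        · rw [h]
end

section
/- Let S be a symmetric Seidel matrix of order n = 4k+2 with k ≥ 1. Then ind(S) = 0 if and only if the characteristic polynomial of S equals (x² - (4k+1))^{2k+1}. -/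
open Matrix Polynomial

lemma symm_sq_zero {n : ℕ} {M : Matrix (Fin n) (Fin n) ℝ} (hM : M.IsSymm)
    (h : M * M = 0) : M = 0 := by
  ext i j
  have h1 : (M * M) i i = 0 := by rw [h]; rfl
  rw [Matrix.mul_apply] at h1
  have h2 : ∀ l, M i l * M l i = (M i l) ^ 2 := fun l => by rw [hM.apply l i]; ring
  simp only [h2] at h1
  have h3 := (Finset.sum_eq_zero_iff_of_nonneg (fun l _ => sq_nonneg (M i l))).mp h1 j
    (Finset.mem_univ j)
  simpa using pow_eq_zero_iff (n := 2) (by norm_num) |>.mp h3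

lemma symm_pow_zero {n : ℕ} {M : Matrix (Fin n) (Fin n) ℝ} (hM : M.IsSymm)
    {m : ℕ} (hm : 0 < m) (h : M ^ m = 0) : M = 0 := by
  clear hm
  have key : ∀ t : ℕ, M ^ (2 ^ t) = 0 → M = 0 := by
    intro t
    induction t with
    | zero => simpa using fun h => h
    | succ t ih =>
      intro ht
      apply ih
      have hsymm : (M ^ (2 ^ t)).IsSymm := by
        rw [Matrix.IsSymm, Matrix.transpose_pow, hM]
      apply symm_sq_zero hsymm
      rw [← pow_add] at *
      rw [← ht]
      ring_nf
  apply key m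
  have : M ^ (2 ^ m) = M ^ m * M ^ (2 ^ m - m) := by
    rw [← pow_add]
    congr 1
    have := Nat.lt_two_pow_self (n := m)
    omega
  rw [this, h, zero_mul]

lemma charpoly_conj {n : Type*} [Fintype n] [DecidableEq n] (P A Pi : Matrix n n ℝ)
    (h1 : P * Pi = 1) (h2 : Pi * P = 1) : (P * A * Pi).charpoly = A.charpoly := by
  have hmapC : ∀ M N : Matrix n n ℝ, (M * N).map (C : ℝ →+* ℝ[X]) =
      M.map (C : ℝ →+* ℝ[X]) * N.map (C : ℝ →+* ℝ[X]) := fun M N =>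
    Matrix.map_mul
  have key : charmatrix (P * A * Pi) =
      P.map (C : ℝ →+* ℝ[X]) * charmatrix A * Pi.map (C : ℝ →+* ℝ[X]) := by
    unfold charmatrix
    rw [mul_sub, sub_mul]
    congr 1
    · rw [mul_assoc, (Matrix.scalar_commute X (Commute.all X) (Pi.map C)).eq,
        ← mul_assoc, ← hmapC, h1]
      simp
    · simp only [RingHom.mapMatrix_apply, ← hmapC]
  rw [Matrix.charpoly, Matrix.charpoly, key, det_mul, det_mul, mul_comm, ← mul_assoc,
    ← det_mul, ← hmapC, h2]
  simp

lemma charpoly_diagonal {n : Type*} [Fintype n] [DecidableEq n] (d : n → ℝ) :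
    (diagonal d).charpoly = ∏ i, (X - C (d i)) := by
  rw [Matrix.charpoly]
  have : charmatrix (diagonal d) = diagonal fun i => X - C (d i) := by
    ext i j
    by_cases h : i = j
    · subst h; simp
    · simp [h, Matrix.diagonal_apply_ne _ h]
  rw [this, det_diagonal]

lemma exists_quasiOrtho_ext {n : ℕ} (S : Matrix (Fin n) (Fin n) ℝ) (hsym : S.IsSymm) :
    ∃ Q : Matrix (Fin (n + n)) (Fin (n + n)) ℝ,
      Q.IsSymm ∧ IsQuasiOrthogonal Q ∧ IsPrincipalSubmatrix S Q := by
  have hH : S.IsHermitian := by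
    rw [Matrix.IsHermitian, conjTranspose_eq_transpose_of_trivial]; exact hsym
  set t : Fin n → ℝ := hH.eigenvalues with ht
  set U : Matrix (Fin n) (Fin n) ℝ := (hH.eigenvectorUnitary : Matrix (Fin n) (Fin n) ℝ) with hU
  have hU1 : U * star U = 1 := mem_unitaryGroup_iff.mp hH.eigenvectorUnitary.2
  have hU2 : star U * U = 1 := mem_unitaryGroup_iff'.mp hH.eigenvectorUnitary.2
  have hspec : S = U * diagonal t * star U := by
    have := hH.spectral_theorem
    rwa [RCLike.ofReal_real_eq_id, Function.id_comp] at this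
  set q : ℝ := 1 + ∑ i, t i ^ 2 with hq
  have hqpos : 0 < q := by positivity
  have hqt : ∀ i, 0 ≤ q - t i ^ 2 := by
    intro i
    have : t i ^ 2 ≤ ∑ j, t j ^ 2 :=
      Finset.single_le_sum (f := fun j => t j ^ 2) (fun _ _ => sq_nonneg _) (Finset.mem_univ i)
    simp only [hq]; linarith
  set g : Fin n → ℝ := fun i => Real.sqrt (q - t i ^ 2) with hg
  have hg2 : ∀ i, g i ^ 2 = q - t i ^ 2 := fun i => Real.sq_sqrt (hqt i)
  set B : Matrix (Fin n) (Fin n) ℝ := U * diagonal g * star U with hB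
  have key : ∀ a b : Fin n → ℝ, (U * diagonal a * star U) * (U * diagonal b * star U) =
      U * diagonal (fun i => a i * b i) * star U := by
    intro a b
    simp only [← Matrix.mul_assoc]
    rw [Matrix.mul_assoc (U * diagonal a) (star U) U, hU2, Matrix.mul_one,
      Matrix.mul_assoc U (diagonal a) (diagonal b), Matrix.diagonal_mul_diagonal]
  have hcomm : S * B = B * S := by
    rw [hspec, hB, key, key]
    have : (fun i => t i * g i) = fun i => g i * t i := by funext i; ring
    rw [this]
  have hdq : (Matrix.diagonal (fun _ : Fin n => q)) = q • (1 : Matrix (Fin n) (Fin n) ℝ) := by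
    ext i j
    by_cases h : i = j <;> simp [h, Matrix.one_apply, Matrix.diagonal_apply]
  have hSS : S * S + B * B = q • (1 : Matrix (Fin n) (Fin n) ℝ) := by
    rw [hspec, hB, key, key, ← Matrix.add_mul, ← Matrix.mul_add, Matrix.diagonal_add]
    have : (fun i => t i * t i + g i * g i) = fun _ : Fin n => q := by
      funext i
      have := hg2 i
      nlinarith
    rw [this, hdq, Matrix.mul_smul, Matrix.mul_one, Matrix.smul_mul, hU1]
  have hdg : star (diagonal g) = diagonal g := by
    simp [Matrix.star_eq_conjTranspose, Matrix.diagonal_conjTranspose]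
  have hBstar : star B = B := by
    rw [hB, StarMul.star_mul, StarMul.star_mul, star_star, hdg, ← Matrix.mul_assoc]
  have hBsymm : B.IsSymm := by
    rw [Matrix.IsSymm, ← conjTranspose_eq_transpose_of_trivial, ← Matrix.star_eq_conjTranspose,
      hBstar]
  set Q' : Matrix (Fin n ⊕ Fin n) (Fin n ⊕ Fin n) ℝ := fromBlocks S B B (-S) with hQ'
  set Q : Matrix (Fin (n + n)) (Fin (n + n)) ℝ :=
    Q'.submatrix finSumFinEquiv.symm finSumFinEquiv.symm with hQdef
  have hQ'symm : Q'ᵀ = Q' := by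
    rw [hQ', fromBlocks_transpose, hsym, hBsymm, Matrix.transpose_neg, hsym]
  have hQsymm : Q.IsSymm := by
    rw [Matrix.IsSymm, hQdef, Matrix.transpose_submatrix, hQ'symm]
  refine ⟨Q, hQsymm, ⟨q, hqpos, ?_⟩, ?_⟩
  · rw [hQsymm]
    rw [hQdef, Matrix.submatrix_mul_equiv]
    have : Q' * Q' = q • (1 : Matrix (Fin n ⊕ Fin n) (Fin n ⊕ Fin n) ℝ) := by
      rw [hQ', fromBlocks_multiply]
      simp only [Matrix.mul_neg, Matrix.neg_mul, neg_neg, hcomm, add_neg_cancel]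
      rw [show B * B + S * S = q • (1 : Matrix (Fin n) (Fin n) ℝ) by rw [add_comm]; exact hSS,
        hSS]
      ext (i | i) (j | j) <;>
        simp [Matrix.one_apply, Matrix.smul_apply, mul_ite]
    rw [this]
    ext i j
    simp [Matrix.submatrix_apply, Matrix.smul_apply, Matrix.one_apply,
      EmbeddingLike.apply_eq_iff_eq]
  · refine ⟨Fin.castAdd n, Fin.strictMono_castAdd n, fun i j => ?_⟩
    rw [hQdef, Matrix.submatrix_apply, finSumFinEquiv_symm_apply_castAdd,
      finSumFinEquiv_symm_apply_castAdd, hQ', fromBlocks_apply₁₁]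

theorem stmt9 {k : ℕ} (hk : 1 ≤ k)
    (S : Matrix (Fin (4 * k + 2)) (Fin (4 * k + 2)) ℝ) (hS : IsSeidel S) :
    qIndex S = 0 ↔ S.charpoly = (X ^ 2 - C ((4 * k + 1 : ℕ) : ℝ)) ^ (2 * k + 1) := by
  have hH : S.IsHermitian := by
    rw [Matrix.IsHermitian, conjTranspose_eq_transpose_of_trivial]; exact hS.1
  constructor
  · intro h0
    unfold qIndex at h0
    have hne : {d : ℕ | ∃ Q : Matrix (Fin (4*k+2 + d)) (Fin (4*k+2 + d)) ℝ,
        Q.IsSymm ∧ IsQuasiOrthogonal Q ∧ IsPrincipalSubmatrix S Q}.Nonempty :=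
      ⟨4*k+2, exists_quasiOrtho_ext S hS.1⟩
    have hmem := Nat.sInf_mem hne
    rw [h0] at hmem
    obtain ⟨Q, hQsym, ⟨q, hqpos, hQq⟩, f, hfmono, hfeq⟩ := hmem
    have hfbij : Function.Bijective f :=
      (Fintype.bijective_iff_injective_and_card f).mpr ⟨hfmono.injective, by simp⟩
    set e := Equiv.ofBijective f hfbij with he
    have hSsub : S = Q.submatrix e e := by
      ext i j
      exact hfeq i j
    have hQQ : Q * Q = q • 1 := by rw [← hQq, hQsym]
    have hSS : S * S = q • (1 : Matrix (Fin (4*k+2)) (Fin (4*k+2)) ℝ) := by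
      rw [hSsub, Matrix.submatrix_mul_equiv, hQQ]
      ext i j
      simp [Matrix.submatrix_apply, Matrix.smul_apply, Matrix.one_apply,
        EmbeddingLike.apply_eq_iff_eq]
    -- compute q
    have hq41 : q = ((4 * k + 1 : ℕ) : ℝ) := by
      set i0 : Fin (4*k+2) := ⟨0, by omega⟩ with hi0
      have h1 : (S * S) i0 i0 = q := by
        rw [hSS]; simp [Matrix.smul_apply, Matrix.one_apply]
      rw [Matrix.mul_apply] at h1
      have h2 : ∀ j, S i0 j * S j i0 = if j = i0 then 0 else 1 := by
        intro j
        by_cases hj : j = i0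
        · subst hj; simp [hS.2.1]
        · have hsymm : S j i0 = S i0 j := hS.1.apply i0 j
          rcases hS.2.2 i0 j (fun h => hj h.symm) with h | h <;>
            rw [hsymm, h] <;> norm_num [hj]
      rw [Finset.sum_congr rfl (fun j _ => h2 j)] at h1
      have h3 : ∀ j : Fin (4*k+2), (if j = i0 then (0:ℝ) else 1) =
          1 - (if j = i0 then 1 else 0) := by intro j; split <;> ring
      rw [Finset.sum_congr rfl (fun j _ => h3 j), Finset.sum_sub_distrib,
        Finset.sum_const, Finset.sum_ite_eq' Finset.univ i0 (fun _ => (1:ℝ))] at h1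
      simp only [Finset.card_univ, Fintype.card_fin, Finset.mem_univ, if_true,
        nsmul_eq_mul, mul_one] at h1
      rw [← h1]
      push_cast
      ring
    -- eigenvalues squared
    set t : Fin (4*k+2) → ℝ := hH.eigenvalues with htdef
    have hteig : ∀ i, t i ^ 2 = q := by
      intro i
      have hv := hH.mulVec_eigenvectorBasis i
      have hv2 : (S * S) *ᵥ ⇑(hH.eigenvectorBasis i) =
          (t i ^ 2) • ⇑(hH.eigenvectorBasis i) := by
        rw [← Matrix.mulVec_mulVec, hv, Matrix.mulVec_smul, hv, smul_smul, ← sq]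
      rw [hSS] at hv2
      have hv3 : q • ⇑(hH.eigenvectorBasis i) = (t i ^ 2) • ⇑(hH.eigenvectorBasis i) := by
        rw [← hv2, Matrix.smul_mulVec, Matrix.one_mulVec]
      have hvne : ⇑(hH.eigenvectorBasis i) ≠ 0 := by
        intro hz
        have h1 : hH.eigenvectorBasis i = 0 := by
          ext x; exact congrFun hz x
        have h2 := hH.eigenvectorBasis.orthonormal.1 i
        rw [h1] at h2
        simp at h2
      have hsub : (q - t i ^ 2) • ⇑(hH.eigenvectorBasis i) = 0 := by
        rw [sub_smul, hv3, sub_self]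
      rcases smul_eq_zero.mp hsub with h | h
      · linarith [sub_eq_zero.mp (by linarith [h] : q - t i ^ 2 = 0)]
      · exact absurd h hvne
    -- charpoly as product
    set U : Matrix (Fin (4*k+2)) (Fin (4*k+2)) ℝ :=
      (hH.eigenvectorUnitary : Matrix (Fin (4*k+2)) (Fin (4*k+2)) ℝ) with hU
    have hU1 : U * star U = 1 := mem_unitaryGroup_iff.mp hH.eigenvectorUnitary.2
    have hU2 : star U * U = 1 := mem_unitaryGroup_iff'.mp hH.eigenvectorUnitary.2
    have hspec : S = U * diagonal t * star U := by
      have := hH.spectral_theorem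
      rwa [RCLike.ofReal_real_eq_id, Function.id_comp] at this
    have hcp : S.charpoly = ∏ i, (X - C (t i)) := by
      calc S.charpoly = (U * diagonal t * star U).charpoly := by rw [← hspec]
        _ = (diagonal t).charpoly := charpoly_conj _ _ _ hU1 hU2
        _ = ∏ i, (X - C (t i)) := _root_.charpoly_diagonal t
    -- trace
    have htr : ∑ i, t i = 0 := by
      have h1 : S.trace = 0 := by
        simp [Matrix.trace, Matrix.diag, hS.2.1]
      have h2 : S.trace = ∑ i, t i := by
        conv_lhs => rw [hspec]
        rw [Matrix.trace_mul_comm, ← Matrix.mul_assoc, hU2, Matrix.one_mul,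
          Matrix.trace_diagonal]
      rw [h1] at h2
      exact h2.symm
    -- r = sqrt q
    set r : ℝ := Real.sqrt q with hrdef
    have hr2 : r ^ 2 = q := Real.sq_sqrt hqpos.le
    have hrpos : 0 < r := Real.sqrt_pos.mpr hqpos
    have hpm : ∀ i, t i = r ∨ t i = -r := by
      intro i
      have hz : (t i - r) * (t i + r) = 0 := by nlinarith [hteig i]
      rcases mul_eq_zero.mp hz with h | h
      · left; linarith
      · right; linarith
    set P : Finset (Fin (4*k+2)) := Finset.univ.filter (fun i => t i = r) with hPdef
    set P' : Finset (Fin (4*k+2)) := Finset.univ.filter (fun i => ¬ t i = r) with hP'def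
    have hcards : P.card + P'.card = 4*k+2 := by
      rw [hPdef, hP'def, Finset.card_filter_add_card_filter_not]
      simp
    have hneg : ∀ i ∈ P', t i = -r := by
      intro i hi
      rcases hpm i with h | h
      · exact absurd h (Finset.mem_filter.mp hi).2
      · exact h
    have hsplit := Finset.sum_filter_add_sum_filter_not Finset.univ (fun i => t i = r) t
    rw [← hPdef, ← hP'def, htr] at hsplit
    have hA : ∑ i ∈ P, t i = (P.card : ℝ) * r := by
      rw [Finset.sum_congr rfl (fun i hi => (Finset.mem_filter.mp hi).2),
        Finset.sum_const, nsmul_eq_mul]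
    have hB : ∑ i ∈ P', t i = (P'.card : ℝ) * (-r) := by
      rw [Finset.sum_congr rfl hneg, Finset.sum_const, nsmul_eq_mul]
    rw [hA, hB] at hsplit
    have hcc : P.card = P'.card := by
      have hz : ((P.card : ℝ) - (P'.card : ℝ)) * r = 0 := by
        linear_combination hsplit
      rcases mul_eq_zero.mp hz with h' | h'
      · exact_mod_cast sub_eq_zero.mp h'
      · exact absurd h' (ne_of_gt hrpos)
    have hPcard : P.card = 2*k+1 := by omega
    have hP'card : P'.card = 2*k+1 := by omega
    have hprod : ∏ i, (X - C (t i)) = (X - C r)^(2*k+1) * (X + C r)^(2*k+1) := by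
      rw [← Finset.prod_filter_mul_prod_filter_not Finset.univ (fun i => t i = r),
        ← hPdef, ← hP'def]
      congr 1
      · rw [Finset.prod_congr rfl (fun i hi => by
          rw [(Finset.mem_filter.mp hi).2]), Finset.prod_const, hPcard]
      · rw [Finset.prod_congr rfl (fun i hi => by
          rw [hneg i hi, map_neg, sub_neg_eq_add]), Finset.prod_const, hP'card]
    rw [hcp, hprod, ← mul_pow]
    have hfin : (X - C r) * (X + C r) = X ^ 2 - C ((4 * k + 1 : ℕ) : ℝ) := by
      have : (X - C r) * (X + C r) = X ^ 2 - C r ^ 2 := by ring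
      rw [this, ← map_pow, hr2, hq41]
    rw [hfin]
  · intro hcp
    have hch := Matrix.aeval_self_charpoly S
    rw [hcp] at hch
    set r0 : ℝ := ((4 * k + 1 : ℕ) : ℝ) with hr0def
    have hr0 : (0:ℝ) < r0 := by
      rw [hr0def]
      exact_mod_cast Nat.succ_pos (4*k)
    rw [map_pow, map_sub, map_pow, aeval_X, aeval_C,
      Algebra.algebraMap_eq_smul_one] at hch
    have hMsymm : (S^2 - r0 • (1 : Matrix (Fin (4*k+2)) (Fin (4*k+2)) ℝ)).IsSymm := by
      rw [Matrix.IsSymm, Matrix.transpose_sub, Matrix.transpose_smul, Matrix.transpose_one,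
        Matrix.transpose_pow, hS.1]
    have hM0 := symm_pow_zero hMsymm (Nat.succ_pos _) hch
    have hS2 : S ^ 2 = r0 • (1 : Matrix (Fin (4*k+2)) (Fin (4*k+2)) ℝ) := by
      rwa [sub_eq_zero] at hM0
    have hSq : Sᵀ * S = r0 • (1 : Matrix (Fin (4*k+2)) (Fin (4*k+2)) ℝ) := by
      rw [hS.1, ← sq, hS2]
    have h0mem : 0 ∈ {d : ℕ | ∃ Q : Matrix (Fin (4*k+2 + d)) (Fin (4*k+2 + d)) ℝ,
        Q.IsSymm ∧ IsQuasiOrthogonal Q ∧ IsPrincipalSubmatrix S Q} :=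
      ⟨S, hS.1, ⟨r0, hr0, hSq⟩, fun i => i, strictMono_id, fun i j => rfl⟩
    exact Nat.eq_zero_of_le_zero (Nat.sInf_le h0mem)
end
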